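/- Let G ≤ Sym(M) act 2-homogeneously on M, where |M| = m ≥ 5, let V = F_2^m with G acting by permuting coordinates, and let C be a G-invariant F_2-subspace of V with minimum distance δ = m. Then C = {0, 1}, the binary repetition code (1 being the all-ones vector), and C is (X,2)-neighbour-transitive, where X = T_C ⋊ G = {v ↦ v^σ + c : σ ∈ G, c ∈ C}. -/
import Mathlib


open Equiv

namespace Paper

/-- A Hamming-graph automorphism of `Fin m → Q` given by entrywise permutations `h`
and a permutation `σ` of the entries. -/
def IsQAutPair {m : ℕ} {Q : Type*} (g : Perm (Fin m → Q)) (h : Fin m → Perm Q)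
    (σ : Perm (Fin m)) : Prop :=
  ∀ α i, g α i = h i (α (σ.symm i))

/-- `g` is an automorphism of the Hamming graph `H(m,q)`. -/
def IsQAut {m : ℕ} {Q : Type*} (g : Perm (Fin m → Q)) : Prop :=
  ∃ h σ, IsQAutPair g h σ

/-- The permutation group `X_i^{Q_i}` induced on the alphabet in entry `i`
by the stabiliser in `X` of the entry `i`. -/
def indQ {m : ℕ} {Q : Type*} (X : Set (Perm (Fin m → Q))) (i : Fin m) : Set (Perm Q) :=
  {π | ∃ g ∈ X, ∃ h σ, IsQAutPair g h σ ∧ σ i = i ∧ h i = π}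

/-- `C_s`, the set of vertices at Hamming distance exactly `s` from the code `C`. -/
def distSet {m : ℕ} {Q : Type*} [DecidableEq Q] (C : Set (Fin m → Q)) (s : ℕ) :
    Set (Fin m → Q) :=
  {v | (∃ c ∈ C, hammingDist v c = s) ∧ ∀ c ∈ C, s ≤ hammingDist v c}

/-- `C` is `(X,s)`-neighbour-transitive: `X` acts transitively on each of
`C = C_0, C_1, …, C_s`. -/
def NbrTrans {m : ℕ} {Q : Type*} [DecidableEq Q] (X : Set (Perm (Fin m → Q)))
    (C : Set (Fin m → Q)) (s : ℕ) : Prop :=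
  ∀ j ≤ s, ∀ u ∈ distSet C j, ∀ v ∈ distSet C j, ∃ g ∈ X, g u = v

/-- `δ` is the minimum distance of the code `C`. -/
def IsMinDist {m : ℕ} {Q : Type*} [DecidableEq Q] (C : Set (Fin m → Q)) (δ : ℕ) : Prop :=
  (∃ u ∈ C, ∃ v ∈ C, u ≠ v ∧ hammingDist u v = δ) ∧
  ∀ u ∈ C, ∀ v ∈ C, u ≠ v → δ ≤ hammingDist u v

/-- The vertex set `V = F_2^m` of the binary Hamming graph `H(m,2)`. -/
abbrev BV (m : ℕ) : Type := Fin m → ZMod 2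

/-- `g` is an automorphism of the binary Hamming graph `H(m,2)`:
`g : v ↦ v^σ + c` for some `σ ∈ Sym(M)` and `c ∈ V`. -/
def IsB2Aut {m : ℕ} (g : Perm (BV m)) : Prop :=
  ∃ (σ : Perm (Fin m)) (c : BV m), ∀ v, g v = (fun i => v (σ.symm i)) + c

/-- The dual of a binary code under the standard inner product. -/
def dualCode {m : ℕ} (D : Set (BV m)) : Set (BV m) :=
  {w | ∀ v ∈ D, (∑ i, v i * w i) = 0}


private lemma zne (x : ZMod 2) : x ≠ 0 ↔ x = 1 := by revert x; decide

private lemma zeq : ∀ x y : ZMod 2, (x = 1 ↔ y = 1) → x = y := by decide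

private lemma zadd : ∀ x y : ZMod 2, x + y + y = x := by decide

def actPerm {m : ℕ} (σ : Perm (Fin m)) (c : BV m) : Perm (BV m) where
  toFun v := (fun i => v (σ.symm i)) + c
  invFun w := fun i => w (σ i) + c (σ i)
  left_inv v := by
    funext i
    simp only [Pi.add_apply, Equiv.symm_apply_apply]
    exact zadd _ _
  right_inv w := by
    funext i
    simp only [Pi.add_apply, Equiv.apply_symm_apply]
    exact zadd _ _

private lemma hd_add {m : ℕ} (u w : BV m) : hammingDist u w = hammingDist (u + w) 0 := by
  simp only [hammingDist]
  congr 1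
  apply Finset.filter_congr
  intro i _
  have : ∀ x y : ZMod 2, (x ≠ y ↔ x + y ≠ 0) := by decide
  simpa using this (u i) (w i)

-- transitivity from 2-homogeneity
private lemma exists_map {m : ℕ} (hm : 5 ≤ m) (G : Subgroup (Perm (Fin m)))
    (hG : ∀ i j k l : Fin m, i ≠ j → k ≠ l →
      ∃ σ ∈ G, (σ i = k ∧ σ j = l) ∨ (σ i = l ∧ σ j = k))
    (a b : Fin m) : ∃ σ ∈ G, σ a = b := by
  by_cases hab : a = b
  · exact ⟨1, one_mem _, by simp [hab]⟩
  · have hk : ∃ k, k ∉ ({a, b} : Finset (Fin m)) := by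
      by_contra h
      push_neg at h
      have h1 : ({a, b} : Finset (Fin m)) = Finset.univ := Finset.eq_univ_iff_forall.mpr h
      have h2 := congrArg Finset.card h1
      have h3 : ({a, b} : Finset (Fin m)).card ≤ 2 :=
        (Finset.card_insert_le _ _).trans (by simp)
      rw [Finset.card_univ, Fintype.card_fin] at h2
      omega
    obtain ⟨k, hk⟩ := hk
    simp only [Finset.mem_insert, Finset.mem_singleton, not_or] at hk
    obtain ⟨σ, hσG, hc⟩ := hG a k b k (fun h => hk.1 h.symm) (fun h => hk.2 h.symm)
    rcases hc with ⟨h1, _⟩ | ⟨h1, h2⟩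
    · exact ⟨σ, hσG, h1⟩
    · exact ⟨σ * σ, mul_mem hσG hσG, by simp [Perm.mul_apply, h1, h2]⟩

private lemma core {m : ℕ} (hm : 5 ≤ m) (G : Subgroup (Perm (Fin m)))
    (hG : ∀ i j k l : Fin m, i ≠ j → k ≠ l →
      ∃ σ ∈ G, (σ i = k ∧ σ j = l) ∨ (σ i = l ∧ σ j = k))
    (j : ℕ) (hj : j ≤ 2) (a b : BV m) (ha : hammingDist a 0 = j)
    (hb : hammingDist b 0 = j) : ∃ σ ∈ G, ∀ i, a (σ.symm i) = b i := by
  interval_cases j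
  · -- j = 0
    have ha0 : a = 0 := hammingDist_eq_zero.mp ha
    have hb0 : b = 0 := hammingDist_eq_zero.mp hb
    exact ⟨1, one_mem _, by simp [ha0, hb0]⟩
  · -- j = 1
    simp only [hammingDist, Pi.zero_apply] at ha hb
    obtain ⟨x, hx⟩ := Finset.card_eq_one.mp ha
    obtain ⟨y, hy⟩ := Finset.card_eq_one.mp hb
    have hax : ∀ z, a z = 1 ↔ z = x := by
      intro z
      rw [← zne]
      have h := Finset.ext_iff.mp hx z
      simpa using h
    have hby : ∀ z, b z = 1 ↔ z = y := by
      intro z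
      rw [← zne]
      have h := Finset.ext_iff.mp hy z
      simpa using h
    obtain ⟨σ, hσG, hσ⟩ := exists_map hm G hG x y
    refine ⟨σ, hσG, fun i => zeq _ _ ?_⟩
    rw [hax, hby, Equiv.symm_apply_eq, hσ, eq_comm]
  · -- j = 2
    simp only [hammingDist, Pi.zero_apply] at ha hb
    obtain ⟨x, x', hxx, hx⟩ := Finset.card_eq_two.mp ha
    obtain ⟨y, y', hyy, hy⟩ := Finset.card_eq_two.mp hb
    have hax : ∀ z, a z = 1 ↔ z = x ∨ z = x' := by
      intro z
      rw [← zne]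
      have h := Finset.ext_iff.mp hx z
      simpa using h
    have hby : ∀ z, b z = 1 ↔ z = y ∨ z = y' := by
      intro z
      rw [← zne]
      have h := Finset.ext_iff.mp hy z
      simpa using h
    obtain ⟨σ, hσG, hc⟩ := hG x x' y y' hxx hyy
    refine ⟨σ, hσG, fun i => zeq _ _ ?_⟩
    rw [hax, hby]
    rcases hc with ⟨h1, h2⟩ | ⟨h1, h2⟩ <;>
      · constructor
        · rintro (h | h)
          all_goals
            rw [Equiv.symm_apply_eq] at h
            subst h
            simp [h1, h2]
        · rintro (rfl | rfl)
          all_goals simp [← h1, ← h2]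

private lemma zsum : ∀ x y : ZMod 2, x ≠ y → x + y = 1 := by decide

private lemma all_ne {m : ℕ} {u v : BV m} (h : hammingDist u v = m) : ∀ i, u i ≠ v i := by
  intro i
  have h1 : (Finset.filter (fun i => u i ≠ v i) Finset.univ) = Finset.univ := by
    apply Finset.eq_univ_of_card
    simp only [hammingDist] at h
    simpa [Fintype.card_fin] using h
  have h2 := Finset.mem_univ i
  rw [← h1, Finset.mem_filter] at h2
  exact h2.2

theorem stmt11 (m : ℕ) (hm : 5 ≤ m)
    (G : Subgroup (Perm (Fin m)))
    (hG : ∀ i j k l : Fin m, i ≠ j → k ≠ l →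
      ∃ σ ∈ G, (σ i = k ∧ σ j = l) ∨ (σ i = l ∧ σ j = k))
    (C : Submodule (ZMod 2) (BV m))
    (hInv : ∀ σ ∈ G, ∀ v ∈ C, (fun i => v (σ.symm i)) ∈ C)
    (hδ : IsMinDist (C : Set (BV m)) m)
    (X : Set (Perm (BV m)))
    (hX : X = {g | ∃ σ ∈ G, ∃ c ∈ C, ∀ v, g v = (fun i => v (σ.symm i)) + c}) :
    (C : Set (BV m)) = {0, fun _ => 1} ∧ NbrTrans X (C : Set (BV m)) 2 := by
  obtain ⟨⟨u0, hu0, v0, hv0, huv0, hd0⟩, hmin⟩ := hδ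
  have hones : (fun _ => 1 : BV m) ∈ C := by
    have hw : u0 + v0 ∈ C := C.add_mem hu0 hv0
    have heq : u0 + v0 = (fun _ => 1 : BV m) := by
      funext i
      exact zsum _ _ (all_ne hd0 i)
    rwa [heq] at hw
  have hCset : (C : Set (BV m)) = {0, fun _ => 1} := by
    ext x
    simp only [SetLike.mem_coe, Set.mem_insert_iff, Set.mem_singleton_iff]
    constructor
    · intro hx
      by_cases hx0 : x = 0
      · exact Or.inl hx0
      · refine Or.inr ?_
        have h1 : m ≤ hammingDist x 0 := hmin x hx 0 C.zero_mem hx0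
        have h2 : hammingDist x 0 ≤ m := by
          simpa [Fintype.card_fin] using
            (hammingDist_le_card_fintype (x := x) (y := (0 : BV m)))
        have h3 : hammingDist x 0 = m := le_antisymm h2 h1
        funext i
        have h4 := all_ne h3 i
        exact (zne _).mp (by simpa using h4)
    · rintro (rfl | rfl)
      · exact C.zero_mem
      · exact hones
  refine ⟨hCset, ?_⟩
  intro j hj u hu v hv
  obtain ⟨⟨cu, hcu, hdu⟩, -⟩ := hu
  obtain ⟨⟨cv, hcv, hdv⟩, -⟩ := hv
  have hcuC : cu ∈ C := hcu
  have hcvC : cv ∈ C := hcv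
  have ha : hammingDist (u + cu) 0 = j := by rw [← hd_add]; exact hdu
  have hb : hammingDist (v + cv) 0 = j := by rw [← hd_add]; exact hdv
  obtain ⟨σ, hσG, hσ⟩ := core hm G hG j hj (u + cu) (v + cv) ha hb
  have hcu01 : cu = 0 ∨ cu = (fun _ => 1 : BV m) := by
    have := hCset ▸ hcu
    simpa using this
  have hconst : ∀ i, cu (σ.symm i) = cu i := by
    rcases hcu01 with rfl | rfl <;> simp
  refine ⟨actPerm σ (cu + cv), ?_, ?_⟩
  · rw [hX]
    exact ⟨σ, hσG, cu + cv, C.add_mem hcuC hcvC, fun _ => rfl⟩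
  · funext i
    have h1 : u (σ.symm i) + cu i = v i + cv i := by
      have h := hσ i
      simp only [Pi.add_apply, hconst i] at h
      exact h
    show u (σ.symm i) + (cu + cv) i = v i
    simp only [Pi.add_apply]
    rw [← add_assoc, h1]
    exact zadd _ _

end Paper
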